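/- arXiv:1911.01466 — 3 statements merged into one kernel-verified Lean document; each statement's English description precedes it below -/
import Mathlib

section
/- Let f : ℝ² → ℝ be of class C⁵ near the origin with f_{20} = f_{02} = f_{30} = f_{03} = 0 at the origin (the asymptotic lines at the hyperbonode are the coordinate axes). Define a : ℝ³ → ℝ by a(x, y, p) = f_{20}(x, y) + 2 f_{11}(x, y) p + f_{02}(x, y) p², and I : ℝ³ → ℝ by I(x, y, p) = (∂a/∂x)(x, y, p) + p (∂a/∂y)(x, y, p), and let G = (a, I) : ℝ³ → ℝ². Then every vector (ξ, η, π) in the kernel of the Fréchet derivative of G at (0, 0, 0) satisfies 2 f_{11} f_{40} ξ − (3 f_{21}² − 2 f_{11} f_{31}) η = 0, where f_{ij} denotes the value at the origin. (This is the equation of the tangent line L_{F_r} to the right flecnodal curve at the hyperbonode.) -/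
/-- Partial derivative in the `x` direction. -/
noncomputable def pdx (f : ℝ × ℝ → ℝ) : ℝ × ℝ → ℝ := fun q => fderiv ℝ f q (1, 0)

/-- Partial derivative in the `y` direction. -/
noncomputable def pdy (f : ℝ × ℝ → ℝ) : ℝ × ℝ → ℝ := fun q => fderiv ℝ f q (0, 1)

/-- `pd i j f = ∂^{i+j} f / ∂x^i ∂y^j`. -/
noncomputable def pd (i j : ℕ) (f : ℝ × ℝ → ℝ) : ℝ × ℝ → ℝ := pdx^[i] (pdy^[j] f)

open Filter

private lemma lin_triple (φ : ℝ × ℝ × ℝ → ℝ) (q : ℝ × ℝ × ℝ) (ξ η π : ℝ) :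
    fderiv ℝ φ q (ξ, η, π)
      = ξ * fderiv ℝ φ q (1, 0, 0) + η * fderiv ℝ φ q (0, 1, 0)
        + π * fderiv ℝ φ q (0, 0, 1) := by
  have h : ((ξ, η, π) : ℝ × ℝ × ℝ)
      = ξ • ((1:ℝ), (0:ℝ), (0:ℝ)) + η • ((0:ℝ), (1:ℝ), (0:ℝ)) + π • ((0:ℝ), (0:ℝ), (1:ℝ)) := by
    simp [Prod.ext_iff]
  rw [h, map_add, map_add, map_smul, map_smul, map_smul]
  simp

private lemma sliceX (g : ℝ × ℝ → ℝ) (x y : ℝ) (h : DifferentiableAt ℝ g (x, y)) :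
    HasDerivAt (fun t => g (x + t, y)) (pdx g (x, y)) 0 := by
  have hc : HasDerivAt (fun t : ℝ => ((x + t : ℝ), y)) ((1 : ℝ), (0 : ℝ)) 0 :=
    ((hasDerivAt_id 0).const_add x).prodMk (hasDerivAt_const 0 y)
  have h' : HasFDerivAt g (fderiv ℝ g (x, y)) ((fun t : ℝ => ((x + t : ℝ), y)) 0) := by
    simpa using h.hasFDerivAt
  have := h'.comp_hasDerivAt 0 hc; exact this

private lemma sliceY (g : ℝ × ℝ → ℝ) (x y : ℝ) (h : DifferentiableAt ℝ g (x, y)) :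
    HasDerivAt (fun t => g (x, y + t)) (pdy g (x, y)) 0 := by
  have hc : HasDerivAt (fun t : ℝ => (x, (y + t : ℝ))) ((0 : ℝ), (1 : ℝ)) 0 :=
    (hasDerivAt_const 0 x).prodMk ((hasDerivAt_id 0).const_add y)
  have h' : HasFDerivAt g (fderiv ℝ g (x, y)) ((fun t : ℝ => (x, (y + t : ℝ))) 0) := by
    simpa using h.hasFDerivAt
  have := h'.comp_hasDerivAt 0 hc; exact this

private lemma pdx_contDiffOn {u : Set (ℝ × ℝ)} (hu : IsOpen u) {m n : ℕ} {g : ℝ × ℝ → ℝ}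
    (hg : ContDiffOn ℝ (n : ℕ) g u) (hmn : m + 1 ≤ n) : ContDiffOn ℝ (m : ℕ) (pdx g) u := by
  have hg' : ContDiffOn ℝ ((m : WithTop ℕ∞) + 1) g u :=
    hg.of_le (by exact_mod_cast hmn)
  have h := ((contDiffOn_succ_iff_fderiv_of_isOpen hu).mp hg').2.2
  exact (ContinuousLinearMap.apply ℝ ℝ ((1:ℝ), (0:ℝ))).contDiff.comp_contDiffOn h

private lemma pdy_contDiffOn {u : Set (ℝ × ℝ)} (hu : IsOpen u) {m n : ℕ} {g : ℝ × ℝ → ℝ}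
    (hg : ContDiffOn ℝ (n : ℕ) g u) (hmn : m + 1 ≤ n) : ContDiffOn ℝ (m : ℕ) (pdy g) u := by
  have hg' : ContDiffOn ℝ ((m : WithTop ℕ∞) + 1) g u :=
    hg.of_le (by exact_mod_cast hmn)
  have h := ((contDiffOn_succ_iff_fderiv_of_isOpen hu).mp hg').2.2
  exact (ContinuousLinearMap.apply ℝ ℝ ((0:ℝ), (1:ℝ))).contDiff.comp_contDiffOn h

private lemma pdx_pdy_symm {g : ℝ × ℝ → ℝ} {q : ℝ × ℝ} (hg : ContDiffAt ℝ 2 g q) :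
    pdy (pdx g) q = pdx (pdy g) q := by
  have hsym := hg.isSymmSndFDerivAt (by simp)
  have hd : DifferentiableAt ℝ (fderiv ℝ g) q := by
    have h1 : ContDiffAt ℝ 1 (fderiv ℝ g) q := hg.fderiv_right (by norm_num)
    exact h1.differentiableAt (by norm_num)
  have e1 : pdy (pdx g) q = fderiv ℝ (fderiv ℝ g) q (0, 1) (1, 0) := by
    have hx : pdx g = fun z => (fderiv ℝ g z) ((1:ℝ), (0:ℝ)) := rfl
    rw [pdy, hx, fderiv_clm_apply hd (differentiableAt_const _)]
    simp
  have e2 : pdx (pdy g) q = fderiv ℝ (fderiv ℝ g) q (1, 0) (0, 1) := by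
    have hy : pdy g = fun z => (fderiv ℝ g z) ((0:ℝ), (1:ℝ)) := rfl
    rw [pdx, hy, fderiv_clm_apply hd (differentiableAt_const _)]
    simp
  rw [e1, e2, hsym]

/-- The canonical "cubic in `p`" form used for both `a` and `I`. -/
private noncomputable def cub (c0 c1 c2 c3 : ℝ × ℝ → ℝ) : ℝ × ℝ × ℝ → ℝ :=
  fun w => c0 (w.1, w.2.1) + c1 (w.1, w.2.1) * w.2.2 + c2 (w.1, w.2.1) * w.2.2 ^ 2
    + c3 (w.1, w.2.1) * w.2.2 ^ 3

section cubic

variable {c0 c1 c2 c3 : ℝ × ℝ → ℝ} {x y p : ℝ}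

private lemma cub_diff (h0 : DifferentiableAt ℝ c0 (x, y)) (h1 : DifferentiableAt ℝ c1 (x, y))
    (h2 : DifferentiableAt ℝ c2 (x, y)) (h3 : DifferentiableAt ℝ c3 (x, y)) :
    DifferentiableAt ℝ (cub c0 c1 c2 c3) (x, y, p) := by
  have he : DifferentiableAt ℝ (fun w : ℝ × ℝ × ℝ => (w.1, w.2.1)) (x, y, p) :=
    differentiableAt_fst.prodMk differentiableAt_snd.fst
  have hp : DifferentiableAt ℝ (fun w : ℝ × ℝ × ℝ => w.2.2) (x, y, p) :=
    differentiableAt_snd.snd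
  exact (((h0.comp (x, y, p) he).add ((h1.comp (x, y, p) he).mul hp)).add
    ((h2.comp (x, y, p) he).mul (hp.pow 2))).add ((h3.comp (x, y, p) he).mul (hp.pow 3))

private lemma cub_d1 (h0 : DifferentiableAt ℝ c0 (x, y)) (h1 : DifferentiableAt ℝ c1 (x, y))
    (h2 : DifferentiableAt ℝ c2 (x, y)) (h3 : DifferentiableAt ℝ c3 (x, y)) :
    fderiv ℝ (cub c0 c1 c2 c3) (x, y, p) (1, 0, 0)
      = pdx c0 (x, y) + pdx c1 (x, y) * p + pdx c2 (x, y) * p ^ 2 + pdx c3 (x, y) * p ^ 3 := by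
  have hF := (cub_diff h0 h1 h2 h3 (p := p)).hasFDerivAt
  have hF' : HasFDerivAt (cub c0 c1 c2 c3) (fderiv ℝ (cub c0 c1 c2 c3) (x, y, p))
      ((fun t : ℝ => ((x + t : ℝ), y, p)) 0) := by simpa using hF
  have hc : HasDerivAt (fun t : ℝ => ((x + t : ℝ), (y : ℝ), (p : ℝ))) ((1:ℝ), (0:ℝ), (0:ℝ)) 0 :=
    ((hasDerivAt_id 0).const_add x).prodMk ((hasDerivAt_const 0 y).prodMk (hasDerivAt_const 0 p))
  have hA : HasDerivAt (fun t : ℝ => cub c0 c1 c2 c3 (x + t, y, p))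
      (fderiv ℝ (cub c0 c1 c2 c3) (x, y, p) (1, 0, 0)) 0 := by have := hF'.comp_hasDerivAt 0 hc; exact this
  have hB : HasDerivAt (fun t : ℝ => c0 (x + t, y) + c1 (x + t, y) * p + c2 (x + t, y) * p ^ 2
      + c3 (x + t, y) * p ^ 3)
      (pdx c0 (x, y) + pdx c1 (x, y) * p + pdx c2 (x, y) * p ^ 2 + pdx c3 (x, y) * p ^ 3) 0 :=
    (((sliceX c0 x y h0).add ((sliceX c1 x y h1).mul_const p)).add
      ((sliceX c2 x y h2).mul_const (p ^ 2))).add ((sliceX c3 x y h3).mul_const (p ^ 3))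
  exact hA.unique hB

private lemma cub_d2 (h0 : DifferentiableAt ℝ c0 (x, y)) (h1 : DifferentiableAt ℝ c1 (x, y))
    (h2 : DifferentiableAt ℝ c2 (x, y)) (h3 : DifferentiableAt ℝ c3 (x, y)) :
    fderiv ℝ (cub c0 c1 c2 c3) (x, y, p) (0, 1, 0)
      = pdy c0 (x, y) + pdy c1 (x, y) * p + pdy c2 (x, y) * p ^ 2 + pdy c3 (x, y) * p ^ 3 := by
  have hF := (cub_diff h0 h1 h2 h3 (p := p)).hasFDerivAt
  have hF' : HasFDerivAt (cub c0 c1 c2 c3) (fderiv ℝ (cub c0 c1 c2 c3) (x, y, p))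
      ((fun t : ℝ => (x, (y + t : ℝ), p)) 0) := by simpa using hF
  have hc : HasDerivAt (fun t : ℝ => ((x : ℝ), (y + t : ℝ), (p : ℝ))) ((0:ℝ), (1:ℝ), (0:ℝ)) 0 :=
    (hasDerivAt_const 0 x).prodMk (((hasDerivAt_id 0).const_add y).prodMk (hasDerivAt_const 0 p))
  have hA : HasDerivAt (fun t : ℝ => cub c0 c1 c2 c3 (x, y + t, p))
      (fderiv ℝ (cub c0 c1 c2 c3) (x, y, p) (0, 1, 0)) 0 := by have := hF'.comp_hasDerivAt 0 hc; exact this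
  have hB : HasDerivAt (fun t : ℝ => c0 (x, y + t) + c1 (x, y + t) * p + c2 (x, y + t) * p ^ 2
      + c3 (x, y + t) * p ^ 3)
      (pdy c0 (x, y) + pdy c1 (x, y) * p + pdy c2 (x, y) * p ^ 2 + pdy c3 (x, y) * p ^ 3) 0 :=
    (((sliceY c0 x y h0).add ((sliceY c1 x y h1).mul_const p)).add
      ((sliceY c2 x y h2).mul_const (p ^ 2))).add ((sliceY c3 x y h3).mul_const (p ^ 3))
  exact hA.unique hB

private lemma cub_d3 (h0 : DifferentiableAt ℝ c0 (x, y)) (h1 : DifferentiableAt ℝ c1 (x, y))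
    (h2 : DifferentiableAt ℝ c2 (x, y)) (h3 : DifferentiableAt ℝ c3 (x, y)) :
    fderiv ℝ (cub c0 c1 c2 c3) (x, y, p) (0, 0, 1)
      = c1 (x, y) + 2 * c2 (x, y) * p + 3 * c3 (x, y) * p ^ 2 := by
  have hF := (cub_diff h0 h1 h2 h3 (p := p)).hasFDerivAt
  have hF' : HasFDerivAt (cub c0 c1 c2 c3) (fderiv ℝ (cub c0 c1 c2 c3) (x, y, p))
      ((fun t : ℝ => (x, y, (p + t : ℝ))) 0) := by simpa using hF
  have hc : HasDerivAt (fun t : ℝ => ((x : ℝ), (y : ℝ), (p + t : ℝ))) ((0:ℝ), (0:ℝ), (1:ℝ)) 0 :=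
    (hasDerivAt_const 0 x).prodMk ((hasDerivAt_const 0 y).prodMk ((hasDerivAt_id 0).const_add p))
  have hA : HasDerivAt (fun t : ℝ => cub c0 c1 c2 c3 (x, y, p + t))
      (fderiv ℝ (cub c0 c1 c2 c3) (x, y, p) (0, 0, 1)) 0 := by have := hF'.comp_hasDerivAt 0 hc; exact this
  have hid : HasDerivAt (fun t : ℝ => (p + t : ℝ)) 1 0 := (hasDerivAt_id 0).const_add p
  have hB : HasDerivAt (fun t : ℝ => c0 (x, y) + c1 (x, y) * (p + t) + c2 (x, y) * (p + t) ^ 2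
      + c3 (x, y) * (p + t) ^ 3)
      (c1 (x, y) * 1 + c2 (x, y) * (2 * (p + 0) ^ 1 * 1) + c3 (x, y) * (3 * (p + 0) ^ 2 * 1)) 0 := by
    have b0 : HasDerivAt (fun _ : ℝ => c0 (x, y)) 0 0 := hasDerivAt_const 0 _
    have b1 : HasDerivAt (fun t : ℝ => c1 (x, y) * (p + t)) (c1 (x, y) * 1) 0 :=
      hid.const_mul _
    have b2 : HasDerivAt (fun t : ℝ => c2 (x, y) * (p + t) ^ 2)
        (c2 (x, y) * (2 * (p + 0) ^ 1 * 1)) 0 := (hid.pow 2).const_mul _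
    have b3 : HasDerivAt (fun t : ℝ => c3 (x, y) * (p + t) ^ 3)
        (c3 (x, y) * (3 * (p + 0) ^ 2 * 1)) 0 := (hid.pow 3).const_mul _
    have := ((b0.add b1).add b2).add b3; rw [zero_add] at this; exact this
  have h := hA.unique hB
  rw [h]; ring

end cubic

private lemma pdx_cmul {g : ℝ × ℝ → ℝ} {z : ℝ × ℝ} (c : ℝ) (h : DifferentiableAt ℝ g z) :
    pdx (fun q => c * g q) z = c * pdx g z := by
  unfold pdx; rw [fderiv_const_mul h]; simp

private lemma pdy_cmul {g : ℝ × ℝ → ℝ} {z : ℝ × ℝ} (c : ℝ) (h : DifferentiableAt ℝ g z) :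
    pdy (fun q => c * g q) z = c * pdy g z := by
  unfold pdy; rw [fderiv_const_mul h]; simp

private lemma pdx_zero_fn (z : ℝ × ℝ) : pdx (fun _ : ℝ × ℝ => (0:ℝ)) z = 0 := by
  simp [pdx]

private lemma pdy_zero_fn (z : ℝ × ℝ) : pdy (fun _ : ℝ × ℝ => (0:ℝ)) z = 0 := by
  simp [pdy]

/-- At a hyperbonode with the asymptotic lines as coordinate axes, every vector in the
kernel of the derivative at the origin of `G = (a, I)` satisfies the equation of the
tangent line `L_{F_r}` to the right flecnodal curve:
`2 f₁₁ f₄₀ ξ − (3 f₂₁² − 2 f₁₁ f₃₁) η = 0`. -/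
theorem tangent_line_right_flecnodal (f : ℝ × ℝ → ℝ) (hf : ContDiffAt ℝ 5 f 0)
    (h20 : pd 2 0 f 0 = 0) (h02 : pd 0 2 f 0 = 0)
    (h30 : pd 3 0 f 0 = 0) (h03 : pd 0 3 f 0 = 0)
    (a : ℝ × ℝ × ℝ → ℝ)
    (ha : ∀ x y p : ℝ,
      a (x, y, p) = pd 2 0 f (x, y) + 2 * pd 1 1 f (x, y) * p + pd 0 2 f (x, y) * p ^ 2)
    (I : ℝ × ℝ × ℝ → ℝ)
    (hI : ∀ x y p : ℝ,
      I (x, y, p) = fderiv ℝ a (x, y, p) (1, 0, 0) + p * fderiv ℝ a (x, y, p) (0, 1, 0))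
    (G : ℝ × ℝ × ℝ → ℝ × ℝ) (hG : ∀ w, G w = (a w, I w))
    (ξ η π' : ℝ) (hker : fderiv ℝ G (0, 0, 0) (ξ, η, π') = 0) :
    2 * pd 1 1 f 0 * pd 4 0 f 0 * ξ
      - (3 * (pd 2 1 f 0) ^ 2 - 2 * pd 1 1 f 0 * pd 3 1 f 0) * η = 0 := by
  -- a neighbourhood on which f is C⁵
  obtain ⟨u0, hu0, hfu0⟩ := hf.contDiffOn (m := 5) le_rfl (by simp)
  obtain ⟨u, huu0, hu, h0u⟩ := mem_nhds_iff.mp hu0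
  have h5 : ContDiffOn ℝ (5 : ℕ) f u := by exact_mod_cast hfu0.mono huu0
  -- smoothness of iterated partial derivatives on u
  have hx4 : ContDiffOn ℝ (4 : ℕ) (pdx f) u := pdx_contDiffOn hu h5 (by norm_num)
  have hy4 : ContDiffOn ℝ (4 : ℕ) (pdy f) u := pdy_contDiffOn hu h5 (by norm_num)
  have hxx3 : ContDiffOn ℝ (3 : ℕ) (pdx (pdx f)) u := pdx_contDiffOn hu hx4 (by norm_num)
  have hxy3 : ContDiffOn ℝ (3 : ℕ) (pdx (pdy f)) u := pdx_contDiffOn hu hy4 (by norm_num)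
  have hyy3 : ContDiffOn ℝ (3 : ℕ) (pdy (pdy f)) u := pdy_contDiffOn hu hy4 (by norm_num)
  have hxxx2 : ContDiffOn ℝ (2 : ℕ) (pdx (pdx (pdx f))) u := pdx_contDiffOn hu hxx3 (by norm_num)
  have hyxx2 : ContDiffOn ℝ (2 : ℕ) (pdy (pdx (pdx f))) u := pdy_contDiffOn hu hxx3 (by norm_num)
  have hxxy2 : ContDiffOn ℝ (2 : ℕ) (pdx (pdx (pdy f))) u := pdx_contDiffOn hu hxy3 (by norm_num)
  have hyxy2 : ContDiffOn ℝ (2 : ℕ) (pdy (pdx (pdy f))) u := pdy_contDiffOn hu hxy3 (by norm_num)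
  have hxyy2 : ContDiffOn ℝ (2 : ℕ) (pdx (pdy (pdy f))) u := pdx_contDiffOn hu hyy3 (by norm_num)
  have hyyy2 : ContDiffOn ℝ (2 : ℕ) (pdy (pdy (pdy f))) u := pdy_contDiffOn hu hyy3 (by norm_num)
  -- generic differentiability extraction
  have dOn : ∀ {n : ℕ} {g : ℝ × ℝ → ℝ}, ContDiffOn ℝ (n : ℕ) g u → 1 ≤ n →
      ∀ z ∈ u, DifferentiableAt ℝ g z := by
    intro n g hg hn z hz
    exact (hg.contDiffAt (hu.mem_nhds hz)).differentiableAt (by exact_mod_cast (by omega : n ≠ 0))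
  have cAt2 : ∀ {n : ℕ} {g : ℝ × ℝ → ℝ}, ContDiffOn ℝ (n : ℕ) g u → 2 ≤ n →
      ∀ z ∈ u, ContDiffAt ℝ 2 g z := by
    intro n g hg hn z hz
    exact (hg.contDiffAt (hu.mem_nhds hz)).of_le (by exact_mod_cast hn)
  -- symmetry of mixed partials on u
  have hsymf : Set.EqOn (pdy (pdx f)) (pdx (pdy f)) u := fun z hz =>
    pdx_pdy_symm ((h5.contDiffAt (hu.mem_nhds hz)).of_le (by exact_mod_cast (by norm_num : (2:ℕ) ≤ 5)))
  have hsymx : Set.EqOn (pdy (pdx (pdx f))) (pdx (pdy (pdx f))) u := fun z hz =>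
    pdx_pdy_symm (cAt2 hx4 (by norm_num) z hz)
  have pdx_congrOn : ∀ {F G : ℝ × ℝ → ℝ}, Set.EqOn F G u → ∀ z ∈ u, pdx F z = pdx G z := by
    intro F G h z hz
    have hev : F =ᶠ[nhds z] G := eventuallyEq_of_mem (hu.mem_nhds hz) h
    simp only [pdx]; rw [hev.fderiv_eq]
  -- key symmetry identities at the origin
  have S1 : pdy (pdx (pdx f)) 0 = pdx (pdx (pdy f)) 0 := by
    have e1 : pdy (pdx (pdx f)) 0 = pdx (pdy (pdx f)) 0 :=
      pdx_pdy_symm (cAt2 hx4 (by norm_num) 0 h0u)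
    have e2 : pdx (pdy (pdx f)) 0 = pdx (pdx (pdy f)) 0 := pdx_congrOn hsymf 0 h0u
    rw [e1, e2]
  have S2 : pdy (pdx (pdx (pdx f))) 0 = pdx (pdx (pdx (pdy f))) 0 := by
    have e1 : pdy (pdx (pdx (pdx f))) 0 = pdx (pdy (pdx (pdx f))) 0 :=
      pdx_pdy_symm (cAt2 hxx3 (by norm_num) 0 h0u)
    have e2 : pdx (pdy (pdx (pdx f))) 0 = pdx (pdx (pdy (pdx f))) 0 :=
      pdx_congrOn hsymx 0 h0u
    have e3 : Set.EqOn (pdx (pdy (pdx f))) (pdx (pdx (pdy f))) u := fun z hz =>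
      pdx_congrOn hsymf z hz
    have e4 : pdx (pdx (pdy (pdx f))) 0 = pdx (pdx (pdx (pdy f))) 0 := pdx_congrOn e3 0 h0u
    rw [e1, e2, e4]
  -- rewrite a in cubic form
  have haeq : a = cub (pdx (pdx f)) (fun q => 2 * pdx (pdy f) q) (pdy (pdy f))
      (fun _ => (0:ℝ)) := by
    funext w
    rw [show a w = a (w.1, w.2.1, w.2.2) from rfl, ha]
    show pd 2 0 f (w.1, w.2.1) + 2 * pd 1 1 f (w.1, w.2.1) * w.2.2
        + pd 0 2 f (w.1, w.2.1) * w.2.2 ^ 2 = _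
    rw [show pd 2 0 f = pdx (pdx f) from rfl, show pd 1 1 f = pdx (pdy f) from rfl,
      show pd 0 2 f = pdy (pdy f) from rfl]
    simp only [cub]
    ring
  subst haeq
  -- rewrite I in cubic form on a neighbourhood of 0
  have hIF : Set.EqOn I
      (cub (pdx (pdx (pdx f)))
        (fun q => 2 * pdx (pdx (pdy f)) q + pdy (pdx (pdx f)) q)
        (fun q => pdx (pdy (pdy f)) q + 2 * pdy (pdx (pdy f)) q)
        (pdy (pdy (pdy f))))
      ((fun w : ℝ × ℝ × ℝ => (w.1, w.2.1)) ⁻¹' u) := by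
    intro w hw
    obtain ⟨x, y, p⟩ := w
    have hxy : (x, y) ∈ u := hw
    have d1 : DifferentiableAt ℝ (pdx (pdx f)) (x, y) := dOn hxx3 (by norm_num) _ hxy
    have dxy : DifferentiableAt ℝ (pdx (pdy f)) (x, y) := dOn hxy3 (by norm_num) _ hxy
    have d2 : DifferentiableAt ℝ (fun q => 2 * pdx (pdy f) q) (x, y) := dxy.const_mul 2
    have d3 : DifferentiableAt ℝ (pdy (pdy f)) (x, y) := dOn hyy3 (by norm_num) _ hxy
    have d4 : DifferentiableAt ℝ (fun _ : ℝ × ℝ => (0:ℝ)) (x, y) := differentiableAt_const 0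
    show I (x, y, p) = _
    rw [hI x y p, cub_d1 d1 d2 d3 d4, cub_d2 d1 d2 d3 d4]
    rw [pdx_cmul 2 dxy, pdy_cmul 2 dxy, pdx_zero_fn, pdy_zero_fn]
    simp only [cub]
    ring
  have hU' : IsOpen ((fun w : ℝ × ℝ × ℝ => (w.1, w.2.1)) ⁻¹' u) :=
    hu.preimage (continuous_fst.prodMk (continuous_snd.fst))
  have h0' : ((0:ℝ), (0:ℝ), (0:ℝ)) ∈ ((fun w : ℝ × ℝ × ℝ => (w.1, w.2.1)) ⁻¹' u) := h0u
  have hIe : I =ᶠ[nhds ((0:ℝ), (0:ℝ), (0:ℝ))]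
      (cub (pdx (pdx (pdx f)))
        (fun q => 2 * pdx (pdx (pdy f)) q + pdy (pdx (pdx f)) q)
        (fun q => pdx (pdy (pdy f)) q + 2 * pdy (pdx (pdy f)) q)
        (pdy (pdy (pdy f)))) :=
    eventuallyEq_of_mem (hU'.mem_nhds h0') hIF
  -- differentiability of the coefficient functions at the origin
  have dC0 : DifferentiableAt ℝ (pdx (pdx (pdx f))) ((0:ℝ), (0:ℝ)) :=
    dOn hxxx2 (by norm_num) _ h0u
  have dC1 : DifferentiableAt ℝ
      (fun q => 2 * pdx (pdx (pdy f)) q + pdy (pdx (pdx f)) q) ((0:ℝ), (0:ℝ)) :=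
    ((dOn hxxy2 (by norm_num) _ h0u).const_mul 2).add (dOn hyxx2 (by norm_num) _ h0u)
  have dC2 : DifferentiableAt ℝ
      (fun q => pdx (pdy (pdy f)) q + 2 * pdy (pdx (pdy f)) q) ((0:ℝ), (0:ℝ)) :=
    (dOn hxyy2 (by norm_num) _ h0u).add ((dOn hyxy2 (by norm_num) _ h0u).const_mul 2)
  have dC3 : DifferentiableAt ℝ (pdy (pdy (pdy f))) ((0:ℝ), (0:ℝ)) :=
    dOn hyyy2 (by norm_num) _ h0u
  have dIcub : DifferentiableAt ℝ
      (cub (pdx (pdx (pdx f)))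
        (fun q => 2 * pdx (pdx (pdy f)) q + pdy (pdx (pdx f)) q)
        (fun q => pdx (pdy (pdy f)) q + 2 * pdy (pdx (pdy f)) q)
        (pdy (pdy (pdy f)))) ((0:ℝ), (0:ℝ), (0:ℝ)) := cub_diff dC0 dC1 dC2 dC3
  have dI0 : DifferentiableAt ℝ I ((0:ℝ), (0:ℝ), (0:ℝ)) :=
    dIcub.congr_of_eventuallyEq hIe
  -- differentiability of a at the origin
  have da1 : DifferentiableAt ℝ (pdx (pdx f)) ((0:ℝ), (0:ℝ)) := dOn hxx3 (by norm_num) _ h0u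
  have da2 : DifferentiableAt ℝ (fun q => 2 * pdx (pdy f) q) ((0:ℝ), (0:ℝ)) :=
    (dOn hxy3 (by norm_num) _ h0u).const_mul 2
  have da3 : DifferentiableAt ℝ (pdy (pdy f)) ((0:ℝ), (0:ℝ)) := dOn hyy3 (by norm_num) _ h0u
  have da4 : DifferentiableAt ℝ (fun _ : ℝ × ℝ => (0:ℝ)) ((0:ℝ), (0:ℝ)) :=
    differentiableAt_const 0
  have dA0 : DifferentiableAt ℝ
      (cub (pdx (pdx f)) (fun q => 2 * pdx (pdy f) q) (pdy (pdy f)) (fun _ => (0:ℝ)))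
      ((0:ℝ), (0:ℝ), (0:ℝ)) := cub_diff da1 da2 da3 da4
  -- split the kernel condition
  have hGeq : G = fun w =>
      (cub (pdx (pdx f)) (fun q => 2 * pdx (pdy f) q) (pdy (pdy f)) (fun _ => (0:ℝ)) w, I w) :=
    funext hG
  subst hGeq
  have hDG := (dA0.hasFDerivAt.prodMk dI0.hasFDerivAt).fderiv
  rw [hDG] at hker
  rw [ContinuousLinearMap.prod_apply] at hker
  have eqA : fderiv ℝ
      (cub (pdx (pdx f)) (fun q => 2 * pdx (pdy f) q) (pdy (pdy f)) (fun _ => (0:ℝ)))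
      ((0:ℝ), (0:ℝ), (0:ℝ)) (ξ, η, π') = 0 := congrArg Prod.fst hker
  have eqI : fderiv ℝ I ((0:ℝ), (0:ℝ), (0:ℝ)) (ξ, η, π') = 0 := congrArg Prod.snd hker
  rw [hIe.fderiv_eq] at eqI
  -- expand the two linear equations
  rw [lin_triple, cub_d1 da1 da2 da3 da4, cub_d2 da1 da2 da3 da4, cub_d3 da1 da2 da3 da4] at eqA
  rw [lin_triple, cub_d1 dC0 dC1 dC2 dC3, cub_d2 dC0 dC1 dC2 dC3, cub_d3 dC0 dC1 dC2 dC3] at eqI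
  simp only [mul_zero, zero_mul, add_zero, zero_add, mul_one, ne_eq, OfNat.ofNat_ne_zero,
    not_false_eq_true, zero_pow, pow_succ, pow_zero, one_mul] at eqA eqI
  -- identify the values with pd's, using symmetry
  have v30 : pdx (pdx (pdx f)) ((0:ℝ), (0:ℝ)) = 0 := h30
  have v21 : pdy (pdx (pdx f)) ((0:ℝ), (0:ℝ)) = pd 2 1 f 0 := S1
  have v11 : pdx (pdy f) ((0:ℝ), (0:ℝ)) = pd 1 1 f 0 := rfl
  have v40 : pdx (pdx (pdx (pdx f))) ((0:ℝ), (0:ℝ)) = pd 4 0 f 0 := rfl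
  have v31 : pdy (pdx (pdx (pdx f))) ((0:ℝ), (0:ℝ)) = pd 3 1 f 0 := S2
  have v21' : pdx (pdx (pdy f)) ((0:ℝ), (0:ℝ)) = pd 2 1 f 0 := rfl
  rw [v30, v21, v11] at eqA
  rw [v40, v31, v21', v21] at eqI
  linear_combination (2 * pd 1 1 f 0) * eqI - (3 * pd 2 1 f 0) * eqA
end

section
/- Let f : ℝ² → ℝ be of class C⁵ near the origin with f_{20} = f_{02} = f_{30} = f_{03} = 0 at the origin. Define â : ℝ³ → ℝ by â(x, y, q) = f_{20}(x, y) q² + 2 f_{11}(x, y) q + f_{02}(x, y), and Î : ℝ³ → ℝ by Î(x, y, q) = (∂â/∂y)(x, y, q) + q (∂â/∂x)(x, y, q), and let Ĝ = (â, Î) : ℝ³ → ℝ². Then every vector (ξ, η, κ) in the kernel of the Fréchet derivative of Ĝ at (0, 0, 0) satisfies 2 f_{11} f_{04} η − (3 f_{12}² − 2 f_{11} f_{13}) ξ = 0, where f_{ij} denotes the value at the origin. (This is the equation of the tangent line L_{F_ℓ} to the left flecnodal curve at the hyperbonode.) -/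
lemma contDiffAt_pdx {m n : WithTop ℕ∞} {g : ℝ×ℝ→ℝ} {x} (h : ContDiffAt ℝ n g x)
    (hmn : m + 1 ≤ n) : ContDiffAt ℝ m (pdx g) x :=
  (h.fderiv_right hmn).clm_apply contDiffAt_const

lemma contDiffAt_pdy {m n : WithTop ℕ∞} {g : ℝ×ℝ→ℝ} {x} (h : ContDiffAt ℝ n g x)
    (hmn : m + 1 ≤ n) : ContDiffAt ℝ m (pdy g) x :=
  (h.fderiv_right hmn).clm_apply contDiffAt_const

/-- directional derivative formula for g : ℝ² → ℝ -/
lemma fderiv_apply_uv {g : ℝ×ℝ→ℝ} {p : ℝ×ℝ} (u v : ℝ) :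
    fderiv ℝ g p (u, v) = u * pdx g p + v * pdy g p := by
  have h : (u, v) = u • ((1:ℝ),(0:ℝ)) + v • ((0:ℝ),(1:ℝ)) := by simp
  rw [h, map_add, map_smul, map_smul, smul_eq_mul, smul_eq_mul]; rfl

/-- Schwarz symmetry of second partials at a point of `C²` regularity. -/
lemma schwarz {h : ℝ×ℝ→ℝ} {z : ℝ×ℝ} (hh : ContDiffAt ℝ 2 h z) :
    pdy (pdx h) z = pdx (pdy h) z := by
  have hd : DifferentiableAt ℝ (fderiv ℝ h) z :=
    (hh.fderiv_right (m := 1) (by norm_num)).differentiableAt (by norm_num)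
  have hsym := hh.isSymmSndFDerivAt (by simp)
  have key : ∀ w : ℝ×ℝ, HasFDerivAt (fun u : ℝ×ℝ => fderiv ℝ h u w)
      ((ContinuousLinearMap.apply ℝ ℝ w).comp (fderiv ℝ (fderiv ℝ h) z)) z := fun w =>
    ((ContinuousLinearMap.apply ℝ ℝ w).hasFDerivAt).comp z hd.hasFDerivAt
  have e1 : pdy (pdx h) z = fderiv ℝ (fderiv ℝ h) z (0,1) (1,0) := by
    show fderiv ℝ (fun u : ℝ×ℝ => fderiv ℝ h u (1,0)) z (0,1) = _
    rw [(key (1,0)).fderiv]; rfl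
  have e2 : pdx (pdy h) z = fderiv ℝ (fderiv ℝ h) z (1,0) (0,1) := by
    show fderiv ℝ (fun u : ℝ×ℝ => fderiv ℝ h u (0,1)) z (1,0) = _
    rw [(key (0,1)).fderiv]; rfl
  rw [e1, e2, hsym]

lemma quad_hasFDerivAt (a b c : ℝ×ℝ→ℝ) (x y q : ℝ)
    (ha : DifferentiableAt ℝ a (x,y)) (hb : DifferentiableAt ℝ b (x,y))
    (hc : DifferentiableAt ℝ c (x,y)) :
    ∃ L : ℝ×ℝ×ℝ →L[ℝ] ℝ, HasFDerivAt
      (fun p : ℝ×ℝ×ℝ => a (p.1,p.2.1) * p.2.2^2 + 2 * b (p.1,p.2.1) * p.2.2 + c (p.1,p.2.1))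
      L (x,y,q) ∧ ∀ u v w : ℝ, L (u,v,w) =
        fderiv ℝ a (x,y) (u,v) * q^2 + 2*q*a (x,y)*w
        + 2*(fderiv ℝ b (x,y) (u,v))*q + 2*b (x,y)*w + fderiv ℝ c (x,y) (u,v) := by
  have hP : HasFDerivAt (fun p : ℝ×ℝ×ℝ => (p.1, p.2.1))
      ((ContinuousLinearMap.fst ℝ ℝ (ℝ×ℝ)).prod
        ((ContinuousLinearMap.fst ℝ ℝ ℝ).comp (ContinuousLinearMap.snd ℝ ℝ (ℝ×ℝ)))) (x,y,q) :=
    hasFDerivAt_fst.prodMk (hasFDerivAt_fst.comp _ hasFDerivAt_snd)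
  have hQ : HasFDerivAt (fun p : ℝ×ℝ×ℝ => p.2.2)
      ((ContinuousLinearMap.snd ℝ ℝ ℝ).comp (ContinuousLinearMap.snd ℝ ℝ (ℝ×ℝ))) (x,y,q) :=
    hasFDerivAt_snd.comp _ hasFDerivAt_snd
  have hA := ha.hasFDerivAt.comp ((x,y,q) : ℝ×ℝ×ℝ) hP
  have hB := hb.hasFDerivAt.comp ((x,y,q) : ℝ×ℝ×ℝ) hP
  have hC := hc.hasFDerivAt.comp ((x,y,q) : ℝ×ℝ×ℝ) hP
  have hfun : (fun p : ℝ×ℝ×ℝ => a (p.1,p.2.1) * p.2.2^2 + 2 * b (p.1,p.2.1) * p.2.2 + c (p.1,p.2.1))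
      = (fun p : ℝ×ℝ×ℝ => a (p.1,p.2.1) * (p.2.2*p.2.2) + 2 * b (p.1,p.2.1) * p.2.2 + c (p.1,p.2.1)) := by
    funext p; ring
  rw [hfun]
  have H := ((hA.mul (hQ.mul hQ)).add ((hB.const_mul 2).mul hQ)).add hC
  refine ⟨_, H, fun u v w => ?_⟩
  simp [ContinuousLinearMap.add_apply, ContinuousLinearMap.smul_apply,
    ContinuousLinearMap.comp_apply, ContinuousLinearMap.prod_apply, smul_eq_mul]
  ring

/-- At a hyperbonode with the asymptotic lines as coordinate axes, every vector in the
kernel of the derivative at the origin of `Ĝ = (â, Î)` satisfies the equation of the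
tangent line `L_{F_ℓ}` to the left flecnodal curve:
`2 f₁₁ f₀₄ η − (3 f₁₂² − 2 f₁₁ f₁₃) ξ = 0`. -/
theorem tangent_line_left_flecnodal (f : ℝ × ℝ → ℝ) (hf : ContDiffAt ℝ 5 f 0)
    (h20 : pd 2 0 f 0 = 0) (h02 : pd 0 2 f 0 = 0)
    (h30 : pd 3 0 f 0 = 0) (h03 : pd 0 3 f 0 = 0)
    (ahat : ℝ × ℝ × ℝ → ℝ)
    (hahat : ∀ x y q : ℝ,
      ahat (x, y, q) = pd 2 0 f (x, y) * q ^ 2 + 2 * pd 1 1 f (x, y) * q + pd 0 2 f (x, y))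
    (Ihat : ℝ × ℝ × ℝ → ℝ)
    (hIhat : ∀ x y q : ℝ,
      Ihat (x, y, q) = fderiv ℝ ahat (x, y, q) (0, 1, 0) + q * fderiv ℝ ahat (x, y, q) (1, 0, 0))
    (Ghat : ℝ × ℝ × ℝ → ℝ × ℝ) (hGhat : ∀ w, Ghat w = (ahat w, Ihat w))
    (ξ η κ : ℝ) (hker : fderiv ℝ Ghat (0, 0, 0) (ξ, η, κ) = 0) :
    2 * pd 1 1 f 0 * pd 0 4 f 0 * η
      - (3 * (pd 1 2 f 0) ^ 2 - 2 * pd 1 1 f 0 * pd 1 3 f 0) * ξ = 0 := by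
  -- second order partials, C³ at the origin
  have h4y : ContDiffAt ℝ 4 (pdy f) 0 := contDiffAt_pdy hf (by norm_num)
  have h4x : ContDiffAt ℝ 4 (pdx f) 0 := contDiffAt_pdx hf (by norm_num)
  have hg20 : ContDiffAt ℝ 3 (pdx (pdx f)) 0 := contDiffAt_pdx h4x (by norm_num)
  have hg11 : ContDiffAt ℝ 3 (pdx (pdy f)) 0 := contDiffAt_pdx h4y (by norm_num)
  have hg02 : ContDiffAt ℝ 3 (pdy (pdy f)) 0 := contDiffAt_pdy h4y (by norm_num)
  -- ahat as an explicit quadratic in q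
  have hahat' : ahat = (fun p : ℝ×ℝ×ℝ => pdx (pdx f) (p.1,p.2.1) * p.2.2^2
      + 2 * pdx (pdy f) (p.1,p.2.1) * p.2.2 + pdy (pdy f) (p.1,p.2.1)) := by
    funext p; exact hahat p.1 p.2.1 p.2.2
  -- eventual differentiability near the origin
  have hev : ∀ᶠ z in nhds ((0:ℝ),(0:ℝ)), DifferentiableAt ℝ (pdx (pdx f)) z ∧
      DifferentiableAt ℝ (pdx (pdy f)) z ∧ DifferentiableAt ℝ (pdy (pdy f)) z := by
    filter_upwards [hg20.eventually (by norm_num), hg11.eventually (by norm_num),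
      hg02.eventually (by norm_num)] with z h1 h2 h3
    exact ⟨h1.differentiableAt (by norm_num), h2.differentiableAt (by norm_num),
      h3.differentiableAt (by norm_num)⟩
  have hπ : ContinuousAt (fun p : ℝ×ℝ×ℝ => (p.1, p.2.1)) ((0:ℝ),(0:ℝ),(0:ℝ)) :=
    (continuous_fst.prodMk (continuous_fst.comp continuous_snd)).continuousAt
  have hev3 := hπ.eventually hev
  -- Ihat agrees with an explicit formula near the origin
  have hevEq : Ihat =ᶠ[nhds ((0:ℝ),(0:ℝ),(0:ℝ))]
      (fun p : ℝ×ℝ×ℝ => (pdy (pdx (pdx f)) (p.1,p.2.1) * p.2.2^2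
          + 2 * pdy (pdx (pdy f)) (p.1,p.2.1) * p.2.2 + pdy (pdy (pdy f)) (p.1,p.2.1))
        + p.2.2 * (pdx (pdx (pdx f)) (p.1,p.2.1) * p.2.2^2
          + 2 * pdx (pdx (pdy f)) (p.1,p.2.1) * p.2.2 + pdx (pdy (pdy f)) (p.1,p.2.1))) := by
    filter_upwards [hev3] with p hp
    obtain ⟨L, hL, hLv⟩ := quad_hasFDerivAt (pdx (pdx f)) (pdx (pdy f)) (pdy (pdy f))
      p.1 p.2.1 p.2.2 hp.1 hp.2.1 hp.2.2
    have hfd : fderiv ℝ ahat (p.1, p.2.1, p.2.2) = L := by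
      rw [hahat']; exact hL.fderiv
    have h1 := hIhat p.1 p.2.1 p.2.2
    rw [hfd, hLv 0 1 0, hLv 1 0 0] at h1
    have h2 : Ihat p = Ihat (p.1, p.2.1, p.2.2) := rfl
    rw [h2, h1]
    simp only [pdx, pdy]
    ring
  -- derivative of ahat at the origin
  obtain ⟨L0, hL0, hL0v⟩ := quad_hasFDerivAt (pdx (pdx f)) (pdx (pdy f)) (pdy (pdy f)) 0 0 0
    (hg20.differentiableAt (by norm_num)) (hg11.differentiableAt (by norm_num))
    (hg02.differentiableAt (by norm_num))
  have hA0 : HasFDerivAt ahat L0 ((0:ℝ),(0:ℝ),(0:ℝ)) := by rw [hahat']; exact hL0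
  -- derivative of the explicit formula for Ihat at the origin
  obtain ⟨L1, hL1, hL1v⟩ := quad_hasFDerivAt (pdy (pdx (pdx f))) (pdy (pdx (pdy f)))
    (pdy (pdy (pdy f))) 0 0 0
    ((contDiffAt_pdy hg20 (by norm_num) : ContDiffAt ℝ 2 _ _).differentiableAt (by norm_num))
    ((contDiffAt_pdy hg11 (by norm_num) : ContDiffAt ℝ 2 _ _).differentiableAt (by norm_num))
    ((contDiffAt_pdy hg02 (by norm_num) : ContDiffAt ℝ 2 _ _).differentiableAt (by norm_num))
  obtain ⟨L2, hL2, hL2v⟩ := quad_hasFDerivAt (pdx (pdx (pdx f))) (pdx (pdx (pdy f)))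
    (pdx (pdy (pdy f))) 0 0 0
    ((contDiffAt_pdx hg20 (by norm_num) : ContDiffAt ℝ 2 _ _).differentiableAt (by norm_num))
    ((contDiffAt_pdx hg11 (by norm_num) : ContDiffAt ℝ 2 _ _).differentiableAt (by norm_num))
    ((contDiffAt_pdx hg02 (by norm_num) : ContDiffAt ℝ 2 _ _).differentiableAt (by norm_num))
  have hQ0 : HasFDerivAt (fun p : ℝ×ℝ×ℝ => p.2.2)
      ((ContinuousLinearMap.snd ℝ ℝ ℝ).comp (ContinuousLinearMap.snd ℝ ℝ (ℝ×ℝ)))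
      ((0:ℝ),(0:ℝ),(0:ℝ)) := hasFDerivAt_snd.comp _ hasFDerivAt_snd
  have hIexp := hL1.add (hQ0.mul hL2)
  have hI0 := hIexp.congr_of_eventuallyEq hevEq
  -- derivative of Ghat
  have hGf : Ghat = fun w => (ahat w, Ihat w) := funext hGhat
  have hG := hA0.prodMk hI0
  rw [← hGf] at hG
  rw [hG.fderiv] at hker
  rw [ContinuousLinearMap.prod_apply, show ((0:ℝ×ℝ)) = ((0:ℝ),(0:ℝ)) from rfl,
    Prod.mk.injEq] at hker
  obtain ⟨e1r, e2r⟩ := hker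
  -- first kernel equation
  rw [hL0v ξ η κ, fderiv_apply_uv, fderiv_apply_uv, fderiv_apply_uv] at e1r
  -- second kernel equation
  simp only [ContinuousLinearMap.add_apply, ContinuousLinearMap.coe_smul',
    ContinuousLinearMap.smul_apply, Pi.smul_apply, smul_eq_mul, ContinuousLinearMap.coe_comp',
    Function.comp_apply, ContinuousLinearMap.coe_snd', hL1v, hL2v] at e2r
  rw [fderiv_apply_uv, fderiv_apply_uv, fderiv_apply_uv, fderiv_apply_uv, fderiv_apply_uv,
    fderiv_apply_uv] at e2r
  -- Schwarz symmetry for the mixed partial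
  have hsch : pdy (pdx (pdy f)) ((0:ℝ),(0:ℝ)) = pdx (pdy (pdy f)) ((0:ℝ),(0:ℝ)) :=
    schwarz (h4y.of_le (by norm_num))
  rw [hsch] at e2r
  -- rename atoms to pd's
  have c11 : pdx (pdy f) ((0:ℝ),(0:ℝ)) = pd 1 1 f 0 := rfl
  have c12 : pdx (pdy (pdy f)) ((0:ℝ),(0:ℝ)) = pd 1 2 f 0 := rfl
  have c03 : pdy (pdy (pdy f)) ((0:ℝ),(0:ℝ)) = pd 0 3 f 0 := rfl
  have c13 : pdx (pdy (pdy (pdy f))) ((0:ℝ),(0:ℝ)) = pd 1 3 f 0 := rfl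
  have c04 : pdy (pdy (pdy (pdy f))) ((0:ℝ),(0:ℝ)) = pd 0 4 f 0 := rfl
  rw [c11, c12, c03] at e1r
  rw [c12, c13, c04] at e2r
  rw [h03] at e1r
  linear_combination (2 * pd 1 1 f 0) * e2r - (3 * pd 1 2 f 0) * e1r
end

section
/- Let f_{40}, f_{31}, f_{22}, f_{13}, f_{04} be real numbers and define the complex numbers a = (f_{40} − 3 f_{22}) + i(3 f_{31} − f_{13}) and b = (f_{31} − 3 f_{13}) − i(f_{04} − 3 f_{22}). Assume b·i − a ≠ 0 and a + i·b ≠ 0 (equivalently, (f_{40} − 6 f_{22} + f_{04})² + 16 (f_{31} − f_{13})² ≠ 0). Set x_F = 2 i b/(b i − a) and x_{F̄} = 2 i b̄/(b̄ i − ā), where z̄ denotes complex conjugation. Then x_F ≠ 1 and (x_F − x_{F̄}) / (x_F − 1) = 4 [ (f_{40} − 3 f_{22})(f_{04} − 3 f_{22}) − (f_{31} − 3 f_{13})(f_{13} − 3 f_{31}) ] / [ (f_{40} − 6 f_{22} + f_{04})² + 16 (f_{31} − f_{13})² ]; in particular this complex number is real. -/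
open Complex in
set_option maxHeartbeats 2000000 in
/-- The computation proving Theorem 6 of the paper: the cross-ratio
`(x_F − x_{F̄})/(x_F − 1)` of the intersections of the tangent lines to the complex
conjugate flecnodal curves and asymptotic lines at an ellipnode is the real number
`4[(f₄₀−3f₂₂)(f₀₄−3f₂₂) − (f₃₁−3f₁₃)(f₁₃−3f₃₁)] / [(f₄₀−6f₂₂+f₀₄)² + 16(f₃₁−f₁₃)²]`. -/
theorem cr_invariant_ellipnode (f40 f31 f22 f13 f04 : ℝ)
    (a b : ℂ)
    (ha : a = ((f40 - 3 * f22 : ℝ) : ℂ) + Complex.I * ((3 * f31 - f13 : ℝ) : ℂ))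
    (hb : b = ((f31 - 3 * f13 : ℝ) : ℂ) - Complex.I * ((f04 - 3 * f22 : ℝ) : ℂ))
    (h1 : b * Complex.I - a ≠ 0) (h2 : a + Complex.I * b ≠ 0)
    (xF xFbar : ℂ)
    (hxF : xF = 2 * Complex.I * b / (b * Complex.I - a))
    (hxFbar : xFbar =
      2 * Complex.I * (starRingEnd ℂ b) /
        ((starRingEnd ℂ b) * Complex.I - starRingEnd ℂ a)) :
    xF ≠ 1 ∧
      (xF - xFbar) / (xF - 1) =
        ((4 * ((f40 - 3 * f22) * (f04 - 3 * f22) - (f31 - 3 * f13) * (f13 - 3 * f31)) /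
          ((f40 - 6 * f22 + f04) ^ 2 + 16 * (f31 - f13) ^ 2) : ℝ) : ℂ) := by
  have hne1 : xF ≠ 1 := by
    intro h
    rw [hxF, div_eq_one_iff_eq h1] at h
    exact h2 (by linear_combination h)
  refine ⟨hne1, ?_⟩
  have h3 : (starRingEnd ℂ b) * Complex.I - starRingEnd ℂ a ≠ 0 := by
    intro h
    have h' := congrArg (starRingEnd ℂ) h
    simp only [map_sub, map_mul, Complex.conj_conj, Complex.conj_I, map_zero] at h'
    exact h2 (by linear_combination -h')
  have hd : ((f40 - 6 * f22 + f04) ^ 2 + 16 * (f31 - f13) ^ 2 : ℝ) ≠ 0 := by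
    intro h
    have e1 : f40 - 6 * f22 + f04 = 0 := by nlinarith [sq_nonneg (f40 - 6 * f22 + f04), sq_nonneg (f31 - f13)]
    have e2 : f31 - f13 = 0 := by nlinarith [sq_nonneg (f40 - 6 * f22 + f04), sq_nonneg (f31 - f13)]
    apply h2
    rw [ha, hb]
    have e1C : (f40 : ℂ) - 6 * f22 + f04 = 0 := by exact_mod_cast congrArg (fun x : ℝ => (x : ℂ)) e1
    have e2C : (f31 : ℂ) - f13 = 0 := by exact_mod_cast congrArg (fun x : ℝ => (x : ℂ)) e2
    push_cast
    have hI : (Complex.I) ^ 2 = -1 := Complex.I_sq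
    linear_combination e1C + 4 * Complex.I * e2C - ((f04 : ℂ) - 3 * f22) * hI
  have hx1 : xF - 1 ≠ 0 := sub_ne_zero.mpr hne1
  have hdC : (((f40 - 6 * f22 + f04) ^ 2 + 16 * (f31 - f13) ^ 2 : ℝ) : ℂ) ≠ 0 := by
    exact_mod_cast hd
  have hca : starRingEnd ℂ a = ((f40 - 3 * f22 : ℝ) : ℂ) - Complex.I * ((3 * f31 - f13 : ℝ) : ℂ) := by
    rw [ha]; simp only [map_add, map_mul, Complex.conj_I, Complex.conj_ofReal]; ring
  have hcb : starRingEnd ℂ b = ((f31 - 3 * f13 : ℝ) : ℂ) + Complex.I * ((f04 - 3 * f22 : ℝ) : ℂ) := by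
    rw [hb]; simp only [map_sub, map_mul, Complex.conj_I, Complex.conj_ofReal]; ring
  rw [hca, hcb] at h3 hxFbar
  rw [ha, hb] at h1 hxF
  subst hxF hxFbar ha hb
  have hdC' : (((f40:ℂ) - 6 * f22 + f04) ^ 2 + 16 * ((f31:ℂ) - f13) ^ 2) ≠ 0 := by
    push_cast at hdC; exact hdC
  have i2 : (Complex.I) ^ 2 = -1 := Complex.I_sq
  have i3 : (Complex.I) ^ 3 = -Complex.I := by rw [pow_succ, i2]; ring
  have i4 : (Complex.I) ^ 4 = 1 := by rw [show (4:ℕ) = 2+2 from rfl, pow_add, i2]; ring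
  have i5 : (Complex.I) ^ 5 = Complex.I := by rw [pow_succ, i4]; ring
  have i6 : (Complex.I) ^ 6 = -1 := by rw [pow_succ, i5, ← sq, i2]
  have i7 : (Complex.I) ^ 7 = -Complex.I := by rw [pow_succ, i6]; ring
  have i8 : (Complex.I) ^ 8 = 1 := by rw [pow_succ, i7]; simp [Complex.I_mul_I]
  push_cast at hx1 h1 h3 ⊢
  rw [div_eq_div_iff hx1 hdC']
  rw [div_sub_div _ _ h1 h3, div_sub_one h1, div_mul_eq_mul_div, ← mul_div_assoc, div_eq_div_iff (mul_ne_zero h1 h3) h1]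
  set_option maxRecDepth 100000 in ring_nf
  simp only [i2, i3, i4, i5, i6, i7, i8]
  ring_nf
end
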